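/- Let A, B, C ∈ ℝ^{n×n} satisfy: A ≥ 0 and C ≥ 0 entrywise; B is an M-matrix, i.e., B = s·I − P for some s ≥ 0 and some entrywise nonnegative P every complex eigenvalue of which has modulus at most s; (A − B + C)·1 = 0 where 1 is the all-ones column vector; and the directed graph on (Fin n) × ℤ with an edge from (i,ℓ) to (j,ℓ+1) iff C_{ij} ≠ 0, from (i,ℓ) to (j,ℓ) iff i ≠ j and B_{ij} ≠ 0, and from (i,ℓ) to (j,ℓ−1) iff A_{ij} ≠ 0, is irreducible (every vertex is reachable from every vertex by a directed walk of positive length) and aperiodic (some vertex admits two closed directed walks of coprime positive lengths). Then there exist: a matrix G ∈ ℝ^{n×n} with A − B·G + C·G² = 0, G ≥ 0 entrywise and G·1 ≤ 1; and a matrix R ∈ ℝ^{n×n} with R²·A − R·B + C = 0, R ≥ 0 entrywise, and u·R ≤ u for every row vector u > 0 with u·(A − B + C) = 0. -/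

import Mathlib

open Matrix

/-- The edge relation of the directed graph of the nonzero off-diagonal entries of the
bi-infinite block tridiagonal matrix with blocks `(A, I - B, C)`. -/
def qbdEdge {n : ℕ} (A B C : Matrix (Fin n) (Fin n) ℝ) :
    (Fin n × ℤ) → (Fin n × ℤ) → Prop := fun x y =>
  (y.2 = x.2 + 1 ∧ C x.1 y.1 ≠ 0) ∨
  (y.2 = x.2 ∧ x.1 ≠ y.1 ∧ B x.1 y.1 ≠ 0) ∨
  (y.2 = x.2 - 1 ∧ A x.1 y.1 ≠ 0)

/-- There is a directed walk of length `k` from `x` to `y` for the edge relation `E`. -/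
def hasWalk {α : Type*} (E : α → α → Prop) (x y : α) (k : ℕ) : Prop :=
  ∃ f : ℕ → α, f 0 = x ∧ f k = y ∧ ∀ i < k, E (f i) (f (i + 1))

/-- The edge relation `E` is irreducible: every vertex is reachable from every vertex by a
directed walk of positive length. -/
def edgeIrreducible {α : Type*} (E : α → α → Prop) : Prop :=
  ∀ x y, ∃ k, 0 < k ∧ hasWalk E x y k

/-- The edge relation `E` is aperiodic: some vertex admits two closed directed walks of
coprime positive lengths. -/
def edgeAperiodic {α : Type*} (E : α → α → Prop) : Prop :=
  ∃ x k₁ k₂, 0 < k₁ ∧ 0 < k₂ ∧ Nat.Coprime k₁ k₂ ∧ hasWalk E x x k₁ ∧ hasWalk E x x k₂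

/-- `B` is an M-matrix: `B = s·I − P` with `s ≥ 0`, `P ≥ 0` entrywise, and every complex
eigenvalue of `P` of modulus at most `s`. -/
def IsMMatrix {n : ℕ} (B : Matrix (Fin n) (Fin n) ℝ) : Prop :=
  ∃ (s : ℝ) (P : Matrix (Fin n) (Fin n) ℝ), 0 ≤ s ∧ (∀ i j, 0 ≤ P i j) ∧
    B = s • (1 : Matrix (Fin n) (Fin n) ℝ) - P ∧
    ∀ μ ∈ spectrum ℂ (P.map (fun x => (x : ℂ))), ‖μ‖ ≤ s

section Auxiliary

open Filter

variable {n : ℕ}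

/-- Iteration of a map on matrices starting from `0`. -/
def qbdIter {n : ℕ} (X : Matrix (Fin n) (Fin n) ℝ → Matrix (Fin n) (Fin n) ℝ) :
    ℕ → Matrix (Fin n) (Fin n) ℝ
  | 0 => 0
  | k + 1 => X (qbdIter X k)

lemma entry_mul_nonneg {X Y : Matrix (Fin n) (Fin n) ℝ}
    (hX : ∀ i j, 0 ≤ X i j) (hY : ∀ i j, 0 ≤ Y i j) : ∀ i j, 0 ≤ (X * Y) i j := by
  intro i j
  rw [Matrix.mul_apply]
  exact Finset.sum_nonneg fun l _ => mul_nonneg (hX i l) (hY l j)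

lemma entry_mul_mono {X X' Y Y' : Matrix (Fin n) (Fin n) ℝ}
    (hX' : ∀ i j, 0 ≤ X' i j) (hY : ∀ i j, 0 ≤ Y i j)
    (h1 : ∀ i j, X i j ≤ X' i j) (h2 : ∀ i j, Y i j ≤ Y' i j) :
    ∀ i j, (X * Y) i j ≤ (X' * Y') i j := by
  intro i j
  rw [Matrix.mul_apply, Matrix.mul_apply]
  exact Finset.sum_le_sum fun l _ => mul_le_mul (h1 i l) (h2 l j) (hY l j) (hX' i l)

lemma mulVec_mono {N : Matrix (Fin n) (Fin n) ℝ} (hN : ∀ i j, 0 ≤ N i j)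
    {x y : Fin n → ℝ} (h : ∀ i, x i ≤ y i) : ∀ i, (N *ᵥ x) i ≤ (N *ᵥ y) i := by
  intro i
  simp only [Matrix.mulVec, dotProduct]
  exact Finset.sum_le_sum fun l _ => mul_le_mul_of_nonneg_left (h l) (hN i l)

lemma vecMul_mono {N : Matrix (Fin n) (Fin n) ℝ} (hN : ∀ i j, 0 ≤ N i j)
    {x y : Fin n → ℝ} (h : ∀ i, x i ≤ y i) : ∀ j, (x ᵥ* N) j ≤ (y ᵥ* N) j := by
  intro j
  simp only [Matrix.vecMul, dotProduct]
  exact Finset.sum_le_sum fun l _ => mul_le_mul_of_nonneg_right (h l) (hN l j)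

lemma tendsto_entry_mul {X Y : ℕ → Matrix (Fin n) (Fin n) ℝ}
    {X' Y' : Matrix (Fin n) (Fin n) ℝ}
    (hX : ∀ i j, Tendsto (fun k => X k i j) atTop (nhds (X' i j)))
    (hY : ∀ i j, Tendsto (fun k => Y k i j) atTop (nhds (Y' i j))) :
    ∀ i j, Tendsto (fun k => (X k * Y k) i j) atTop (nhds ((X' * Y') i j)) := by
  intro i j
  simp only [Matrix.mul_apply]
  exact tendsto_finset_sum _ fun l _ => (hX i l).mul (hY l j)

lemma trapped {A B C : Matrix (Fin n) (Fin n) ℝ}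
    (hirr : edgeIrreducible (qbdEdge A B C)) (S : Set (Fin n)) {i0 : Fin n} (hi0 : i0 ∈ S)
    (hAz : ∀ i ∈ S, ∀ j, A i j = 0) (hCz : ∀ i ∈ S, ∀ j, C i j = 0)
    (hBz : ∀ i ∈ S, ∀ j, j ∉ S → B i j = 0) : False := by
  obtain ⟨k, hk, f, hf0, hfk, hstep⟩ := hirr (i0, 0) (i0, 1)
  have key : ∀ m, m ≤ k → (f m).1 ∈ S ∧ (f m).2 = 0 := by
    intro m
    induction m with
    | zero => intro _; rw [hf0]; exact ⟨hi0, rfl⟩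
    | succ m ih =>
      intro hm
      obtain ⟨hS, hlev⟩ := ih (le_of_lt (Nat.lt_of_succ_le hm))
      rcases hstep m (Nat.lt_of_succ_le hm) with h | h | h
      · exact absurd (hCz _ hS _) h.2
      · refine ⟨?_, by rw [h.1, hlev]⟩
        by_contra hj
        exact h.2.2 (hBz _ hS _ hj)
      · exact absurd (hAz _ hS _) h.2
  have h2 := (key k le_rfl).2
  rw [hfk] at h2
  simp at h2

lemma rowsum_B {A B C : Matrix (Fin n) (Fin n) ℝ}
    (hsum : (A - B + C) *ᵥ (fun _ => 1) = 0) (i : Fin n) :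
    ∑ j, B i j = ∑ j, A i j + ∑ j, C i j := by
  have h := congrFun hsum i
  simp only [Matrix.mulVec, dotProduct, Matrix.add_apply, Matrix.sub_apply,
    mul_one, Pi.zero_apply] at h
  rw [Finset.sum_add_distrib, Finset.sum_sub_distrib] at h
  linarith

lemma rowsum_P {A B C P : Matrix (Fin n) (Fin n) ℝ} {s : ℝ}
    (hBe : B = s • (1 : Matrix (Fin n) (Fin n) ℝ) - P)
    (hsum : (A - B + C) *ᵥ (fun _ => 1) = 0) (i : Fin n) :
    ∑ j, P i j = s - (∑ j, A i j + ∑ j, C i j) := by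
  have h := rowsum_B hsum i
  rw [hBe] at h
  simp only [Matrix.sub_apply, Matrix.smul_apply, Matrix.one_apply, smul_eq_mul,
    mul_ite, mul_one, mul_zero] at h
  rw [Finset.sum_sub_distrib, Finset.sum_ite_eq Finset.univ i (fun _ => s)] at h
  simp at h
  linarith

lemma B_mulVec_nonneg {A B C P : Matrix (Fin n) (Fin n) ℝ} {s : ℝ}
    (hA : ∀ i j, 0 ≤ A i j) (hC : ∀ i j, 0 ≤ C i j)
    (hP : ∀ i j, 0 ≤ P i j) (hBe : B = s • (1 : Matrix (Fin n) (Fin n) ℝ) - P)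
    (hsum : (A - B + C) *ᵥ (fun _ => 1) = 0)
    (hirr : edgeIrreducible (qbdEdge A B C))
    {x : Fin n → ℝ} (hb : ∀ i, 0 ≤ (B *ᵥ x) i) : ∀ i, 0 ≤ x i := by
  by_contra hcon
  push_neg at hcon
  obtain ⟨i1, hi1⟩ := hcon
  obtain ⟨i0, -, hmin⟩ := Finset.exists_min_image Finset.univ x ⟨i1, Finset.mem_univ i1⟩
  set m := x i0 with hm_def
  have hm : m < 0 := lt_of_le_of_lt (hmin i1 (Finset.mem_univ i1)) hi1
  have hBx : ∀ i, (B *ᵥ x) i = s * x i - ∑ j, P i j * x j := by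
    intro i
    rw [hBe]
    simp only [Matrix.mulVec, dotProduct, Matrix.sub_apply, Matrix.smul_apply,
      Matrix.one_apply, smul_eq_mul, sub_mul, mul_ite, mul_one, mul_zero, ite_mul, zero_mul]
    rw [Finset.sum_sub_distrib, Finset.sum_ite_eq Finset.univ i (fun j => s * x j)]
    simp
  have hProwle : ∀ i, ∑ j, P i j ≤ s := by
    intro i
    rw [rowsum_P hBe hsum i]
    have : 0 ≤ ∑ j, A i j + ∑ j, C i j := by
      have := Finset.sum_nonneg (fun j (_ : j ∈ Finset.univ) => hA i j)
      have := Finset.sum_nonneg (fun j (_ : j ∈ Finset.univ) => hC i j)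
      linarith
    linarith
  have key : ∀ i, x i = m → (∀ j, A i j = 0) ∧ (∀ j, C i j = 0) ∧ (∀ j, x j ≠ m → P i j = 0) := by
    intro i hxi
    have h1 : (∑ j, P i j) * m ≤ ∑ j, P i j * x j := by
      rw [Finset.sum_mul]
      exact Finset.sum_le_sum fun j _ =>
        mul_le_mul_of_nonneg_left (hmin j (Finset.mem_univ j)) (hP i j)
    have h2 : s * m ≤ (∑ j, P i j) * m :=
      mul_le_mul_of_nonpos_right (hProwle i) hm.le
    have hb' : ∑ j, P i j * x j ≤ s * m := by
      have := hb i
      rw [hBx i, hxi] at this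
      linarith
    have e2 : (∑ j, P i j) * m = s * m := le_antisymm (by linarith) h2
    have e1 : ∑ j, P i j * m = ∑ j, P i j * x j := by
      have hsm : ∑ j, P i j * m = (∑ j, P i j) * m := by rw [Finset.sum_mul]
      linarith
    have hrP : ∑ j, P i j = s := mul_right_cancel₀ hm.ne e2
    have hACz : ∑ j, A i j + ∑ j, C i j = 0 := by
      have := rowsum_P hBe hsum i
      rw [hrP] at this
      linarith
    have hAz : ∀ j, A i j = 0 := by
      intro j
      have hA0 : ∑ j, A i j = 0 := by
        have h1 := Finset.sum_nonneg (fun j (_ : j ∈ Finset.univ) => hA i j)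
        have h2 := Finset.sum_nonneg (fun j (_ : j ∈ Finset.univ) => hC i j)
        linarith
      exact (Finset.sum_eq_zero_iff_of_nonneg (fun j _ => hA i j)).mp hA0 j (Finset.mem_univ j)
    have hCz : ∀ j, C i j = 0 := by
      intro j
      have hC0 : ∑ j, C i j = 0 := by
        have h1 := Finset.sum_nonneg (fun j (_ : j ∈ Finset.univ) => hA i j)
        have h2 := Finset.sum_nonneg (fun j (_ : j ∈ Finset.univ) => hC i j)
        linarith
      exact (Finset.sum_eq_zero_iff_of_nonneg (fun j _ => hC i j)).mp hC0 j (Finset.mem_univ j)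
    refine ⟨hAz, hCz, ?_⟩
    intro j hxj
    have hall := (Finset.sum_eq_sum_iff_of_le
      (fun j (_ : j ∈ Finset.univ) =>
        mul_le_mul_of_nonneg_left (hmin j (Finset.mem_univ j)) (hP i j))).mp
      e1
    have := hall j (Finset.mem_univ j)
    rcases mul_eq_mul_left_iff.mp this with h | h
    · exact absurd h.symm hxj
    · exact h
  refine trapped hirr {j | x j = m} (hm_def.symm : x i0 = m)
    (fun i hi j => (key i hi).1 j) (fun i hi j => (key i hi).2.1 j) ?_
  intro i hi j hj
  have hij : i ≠ j := fun h => hj (h ▸ hi)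
  have hP0 := (key i hi).2.2 j hj
  rw [hBe]
  simp [Matrix.sub_apply, Matrix.smul_apply, Matrix.one_apply, if_neg hij, hP0]

lemma exists_stationary {A B C P : Matrix (Fin n) (Fin n) ℝ} {s : ℝ} (hn : 0 < n)
    (hA : ∀ i j, 0 ≤ A i j) (hC : ∀ i j, 0 ≤ C i j) (hs : 0 ≤ s)
    (hP : ∀ i j, 0 ≤ P i j) (hBe : B = s • (1 : Matrix (Fin n) (Fin n) ℝ) - P)
    (hsum : (A - B + C) *ᵥ (fun _ => 1) = 0)
    (hirr : edgeIrreducible (qbdEdge A B C)) :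
    ∃ u : Fin n → ℝ, (∀ i, 0 < u i) ∧ u ᵥ* (A - B + C) = 0 := by
  set Q : Matrix (Fin n) (Fin n) ℝ := A - B + C with hQ
  set t : ℝ := (1 + s)⁻¹ with ht_def
  have ht : 0 < t := inv_pos.mpr (by linarith)
  have hts : t * s < 1 := by
    rw [ht_def, inv_mul_eq_div, div_lt_one (by linarith)]
    linarith
  set M : Matrix (Fin n) (Fin n) ℝ := 1 + t • Q with hM
  have hQoff : ∀ i j, i ≠ j → Q i j = A i j + C i j + P i j := by
    intro i j hij
    simp only [hQ, Matrix.add_apply, Matrix.sub_apply, hBe, Matrix.smul_apply,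
      Matrix.one_apply, if_neg hij, smul_eq_mul, mul_zero]
    ring
  have hMoff : ∀ i j, i ≠ j → M i j = t * Q i j := by
    intro i j hij
    simp only [hM, Matrix.add_apply, Matrix.smul_apply, Matrix.one_apply, if_neg hij,
      smul_eq_mul]
    ring
  have hMnn : ∀ i j, 0 ≤ M i j := by
    intro i j
    by_cases hij : i = j
    · subst hij
      have hQd : Q i i = A i i + C i i + P i i - s := by
        rw [hQ]
        simp only [Matrix.add_apply, Matrix.sub_apply, hBe, Matrix.smul_apply,
          Matrix.one_apply_eq, smul_eq_mul, mul_one]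
        ring
      have hMd : M i i = 1 + t * Q i i := by
        rw [hM, Matrix.add_apply, Matrix.smul_apply, Matrix.one_apply_eq, smul_eq_mul]
      rw [hMd, hQd]
      have h1 : t * (A i i + C i i + P i i - s) ≥ t * (-s) := by
        have := hA i i; have := hC i i; have := hP i i
        apply mul_le_mul_of_nonneg_left _ ht.le
        linarith
      have : t * (-s) = -(t*s) := by ring
      linarith
    · rw [hMoff i j hij, hQoff i j hij]
      have := hA i j; have := hC i j; have := hP i j
      positivity
  have hMone : M *ᵥ (fun _ => 1) = (fun _ => 1) := by
    rw [hM, Matrix.add_mulVec, Matrix.one_mulVec, Matrix.smul_mulVec, hsum]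
    simp
  have hrow1 : ∀ i, ∑ j, M i j = 1 := by
    intro i
    have := congrFun hMone i
    simpa [Matrix.mulVec, dotProduct] using this
  have hMknn : ∀ k, ∀ i j, 0 ≤ (M ^ k) i j := by
    intro k
    induction k with
    | zero => intro i j; by_cases h : i = j <;> simp [pow_zero, Matrix.one_apply, h]
    | succ k ih =>
      rw [pow_succ]
      exact entry_mul_nonneg ih hMnn
  -- positivity of an entry of a power from a QBD walk
  have hedgeM : ∀ x y, qbdEdge A B C x y → x.1 = y.1 ∨ 0 < M x.1 y.1 := by
    intro x y h
    by_cases hxy : x.1 = y.1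
    · exact Or.inl hxy
    · right
      rw [hMoff _ _ hxy, hQoff _ _ hxy]
      have hQpos : 0 < A x.1 y.1 + C x.1 y.1 + P x.1 y.1 := by
        rcases h with h | h | h
        · have := (hC x.1 y.1).lt_of_ne (Ne.symm h.2)
          have := hA x.1 y.1; have := hP x.1 y.1
          linarith
        · have hBne := h.2.2
          have hPne : P x.1 y.1 ≠ 0 := by
            intro h0
            apply hBne
            rw [hBe]
            simp [Matrix.sub_apply, Matrix.smul_apply, Matrix.one_apply, if_neg hxy, h0]
          have := (hP x.1 y.1).lt_of_ne (Ne.symm hPne)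
          have := hA x.1 y.1; have := hC x.1 y.1
          linarith
        · have := (hA x.1 y.1).lt_of_ne (Ne.symm h.2)
          have := hC x.1 y.1; have := hP x.1 y.1
          linarith
      positivity
  have hstep_pos : ∀ (m : ℕ) (a z b : Fin n), 0 < (M ^ m) a z → 0 < M z b →
      0 < (M ^ (m + 1)) a b := by
    intro m a z b h1 h2
    rw [pow_succ, Matrix.mul_apply]
    have hle : (M ^ m) a z * M z b ≤ ∑ l, (M ^ m) a l * M l b :=
      Finset.single_le_sum (f := fun l => (M ^ m) a l * M l b)
        (fun l _ => mul_nonneg (hMknn m a l) (hMnn l b)) (Finset.mem_univ z)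
    exact lt_of_lt_of_le (mul_pos h1 h2) hle
  have hreach : ∀ (k : ℕ) (x y : Fin n × ℤ), hasWalk (qbdEdge A B C) x y k →
      ∃ m, 0 < (M ^ m) x.1 y.1 := by
    intro k
    induction k with
    | zero =>
      rintro x y ⟨f, hf0, hfk, -⟩
      have hxy : x = y := hf0.symm.trans hfk
      refine ⟨0, ?_⟩
      rw [← hxy]
      simp [Matrix.one_apply]
    | succ k ih =>
      rintro x y ⟨f, hf0, hfk, hstep⟩
      obtain ⟨m, hm⟩ := ih x (f k) ⟨f, hf0, rfl, fun i hi => hstep i (Nat.lt_succ_of_lt hi)⟩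
      have hedge := hedgeM (f k) y (hfk ▸ hstep k (Nat.lt_succ_self k))
      rcases hedge with h | h
      · exact ⟨m, h ▸ hm⟩
      · exact ⟨m + 1, hstep_pos m x.1 (f k).1 y.1 hm h⟩
  have hreachall : ∀ i j : Fin n, ∃ m, 0 < (M ^ m) i j := by
    intro i j
    obtain ⟨k, -, hw⟩ := hirr (i, 0) (j, 0)
    exact hreach k (i, 0) (j, 0) hw
  -- existence of a nonzero left fixed vector
  have hone_ne : (fun (_ : Fin n) => (1:ℝ)) ≠ 0 := by
    intro h
    have := congrFun h ⟨0, hn⟩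
    simp at this
  have hdet0 : (M - 1).det = 0 := by
    apply (Matrix.exists_mulVec_eq_zero_iff).mp
    refine ⟨fun _ => 1, hone_ne, ?_⟩
    rw [Matrix.sub_mulVec, hMone, Matrix.one_mulVec]
    simp
  have hdetT : ((M - 1)ᵀ).det = 0 := by rw [Matrix.det_transpose]; exact hdet0
  obtain ⟨w, hw0, hwv⟩ := (Matrix.exists_mulVec_eq_zero_iff).mpr hdetT
  have hwM : w ᵥ* M = w := by
    have h1 : w ᵥ* (M - 1) = 0 := by
      rw [← Matrix.mulVec_transpose]
      exact hwv
    rw [Matrix.vecMul_sub, Matrix.vecMul_one, sub_eq_zero] at h1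
    exact h1
  set v : Fin n → ℝ := fun i => |w i| with hv
  have hvnn : ∀ i, 0 ≤ v i := fun i => abs_nonneg _
  have hvM_ge : ∀ j, v j ≤ (v ᵥ* M) j := by
    intro j
    have h1 : v j = |(w ᵥ* M) j| := by rw [hwM]
    rw [h1]
    simp only [Matrix.vecMul, dotProduct]
    calc |∑ i, w i * M i j| ≤ ∑ i, |w i * M i j| := Finset.abs_sum_le_sum_abs _ _
    _ = ∑ i, v i * M i j := by
        apply Finset.sum_congr rfl
        intro i _
        rw [abs_mul, abs_of_nonneg (hMnn i j)]
  have hsum_eq : ∑ j, (v ᵥ* M) j = ∑ j, v j := by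
    simp only [Matrix.vecMul, dotProduct]
    rw [Finset.sum_comm]
    apply Finset.sum_congr rfl
    intro i _
    rw [← Finset.mul_sum, hrow1 i, mul_one]
  have hvM : v ᵥ* M = v := by
    funext j
    have hz : ∑ j, ((v ᵥ* M) j - v j) = 0 := by
      rw [Finset.sum_sub_distrib, hsum_eq, sub_self]
    have := (Finset.sum_eq_zero_iff_of_nonneg
      (fun j _ => sub_nonneg.mpr (hvM_ge j))).mp hz j (Finset.mem_univ j)
    linarith
  have hvMk : ∀ k, v ᵥ* (M ^ k) = v := by
    intro k
    induction k with
    | zero => simp [pow_zero]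
    | succ k ih => rw [pow_succ, ← Matrix.vecMul_vecMul, ih, hvM]
  have hvpos : ∀ j, 0 < v j := by
    obtain ⟨i, hi⟩ := Function.ne_iff.mp hw0
    have hvi : 0 < v i := abs_pos.mpr hi
    intro j
    obtain ⟨m, hm⟩ := hreachall i j
    have h1 : v i * (M ^ m) i j ≤ ∑ l, v l * (M ^ m) l j :=
      Finset.single_le_sum (f := fun l => v l * (M ^ m) l j)
        (fun l _ => mul_nonneg (hvnn l) (hMknn m l j)) (Finset.mem_univ i)
    have h2 : (v ᵥ* (M ^ m)) j = ∑ l, v l * (M ^ m) l j := by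
      simp [Matrix.vecMul, dotProduct]
    have := hvMk m
    have h3 : v j = ∑ l, v l * (M ^ m) l j := by rw [← h2, this]
    rw [h3]
    exact lt_of_lt_of_le (mul_pos hvi hm) h1
  refine ⟨v, hvpos, ?_⟩
  have hsmul : v ᵥ* (t • Q) = t • (v ᵥ* Q) := by
    funext j
    simp only [Matrix.vecMul, dotProduct, Matrix.smul_apply, Pi.smul_apply,
      smul_eq_mul, Finset.mul_sum]
    exact Finset.sum_congr rfl fun i _ => by ring
  have h1 : v ᵥ* M = v ᵥ* 1 + t • (v ᵥ* Q) := by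
    rw [hM, Matrix.vecMul_add, hsmul]
  rw [hvM, Matrix.vecMul_one] at h1
  have h2 : t • (v ᵥ* Q) = 0 := by
    have := h1.symm
    rw [add_eq_left] at this
    exact this
  have := smul_eq_zero.mp h2
  rcases this with h | h
  · exact absurd h ht.ne'
  · exact h

end Auxiliary


open Filter in
/-- Existence of the minimal nonnegative solutions `G` and `R` of the quadratic matrix
equations associated with a QBD process satisfying Assumptions A4, A5, A6. -/
theorem exists_G_and_R {n : ℕ} (A B C : Matrix (Fin n) (Fin n) ℝ)
    (hA : ∀ i j, 0 ≤ A i j) (hC : ∀ i j, 0 ≤ C i j) (hB : IsMMatrix B)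
    (hsum : (A - B + C).mulVec (fun _ => 1) = 0)
    (hirr : edgeIrreducible (qbdEdge A B C))
    (haper : edgeAperiodic (qbdEdge A B C)) :
    (∃ G : Matrix (Fin n) (Fin n) ℝ, A - B * G + C * G ^ 2 = 0 ∧ (∀ i j, 0 ≤ G i j) ∧
      ∀ i, G.mulVec (fun _ => 1) i ≤ 1) ∧
    (∃ R : Matrix (Fin n) (Fin n) ℝ, R ^ 2 * A - R * B + C = 0 ∧ (∀ i j, 0 ≤ R i j) ∧
      ∀ u : Fin n → ℝ, (∀ i, 0 < u i) → Matrix.vecMul u (A - B + C) = 0 →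
        ∀ j, Matrix.vecMul u R j ≤ u j) := by
  obtain ⟨s, P, hs, hP, hBe, -⟩ := hB
  rcases Nat.eq_zero_or_pos n with hn | hn
  · subst hn
    exact ⟨⟨0, by ext i j; exact i.elim0, fun i j => i.elim0, fun i => i.elim0⟩,
           ⟨0, by ext i j; exact i.elim0, fun i j => i.elim0, fun u _ _ j => j.elim0⟩⟩
  -- B is invertible
  have hdet : IsUnit B.det := by
    rcases eq_or_ne B.det 0 with h0 | h0
    · exfalso
      obtain ⟨v, hv0, hBv⟩ := (Matrix.exists_mulVec_eq_zero_iff).mpr h0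
      have h1 : ∀ i, 0 ≤ v i := B_mulVec_nonneg hA hC hP hBe hsum hirr
        (by rw [hBv]; intro i; exact le_refl 0)
      have h2 : ∀ i, 0 ≤ (-v) i := by
        apply B_mulVec_nonneg hA hC hP hBe hsum hirr
        have hneg : B *ᵥ (-v) = 0 := by
          rw [Matrix.mulVec_neg, hBv, neg_zero]
        rw [hneg]
        intro i; exact le_refl 0
      apply hv0
      funext i
      have ha := h1 i
      have hb := h2 i
      simp only [Pi.neg_apply] at hb
      have : v i = 0 := le_antisymm (by linarith) ha
      exact this
    · exact isUnit_iff_ne_zero.mpr h0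
  have hBBinv : B * B⁻¹ = 1 := Matrix.mul_nonsing_inv B hdet
  have hBinvB : B⁻¹ * B = 1 := Matrix.nonsing_inv_mul B hdet
  have hBinv_nn : ∀ i j, 0 ≤ B⁻¹ i j := by
    intro i j
    have hcol : ∀ i', 0 ≤ (B *ᵥ fun k => B⁻¹ k j) i' := by
      intro i'
      have he : (B *ᵥ fun k => B⁻¹ k j) i' = (B * B⁻¹) i' j := by
        simp [Matrix.mulVec, dotProduct, Matrix.mul_apply]
      rw [he, hBBinv]
      by_cases h : i' = j <;> simp [Matrix.one_apply, h]
    exact B_mulVec_nonneg hA hC hP hBe hsum hirr hcol i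
  have hAC_B : ∀ i, (A *ᵥ fun _ => (1:ℝ)) i + (C *ᵥ fun _ => (1:ℝ)) i
      = (B *ᵥ fun _ => (1:ℝ)) i := by
    intro i
    have h := congrFun hsum i
    rw [Matrix.add_mulVec, Matrix.sub_mulVec] at h
    simp only [Pi.add_apply, Pi.sub_apply, Pi.zero_apply] at h
    linarith
  constructor
  -- ===================== G part =====================
  · set g : ℕ → Matrix (Fin n) (Fin n) ℝ :=
      qbdIter (fun G => B⁻¹ * (A + C * G * G)) with hg_def
    have hgsucc : ∀ k, g (k + 1) = B⁻¹ * (A + C * g k * g k) := fun k => rfl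
    have hg0 : g 0 = 0 := rfl
    have hgnn : ∀ k i j, 0 ≤ g k i j := by
      intro k
      induction k with
      | zero => intro i j; rw [hg0]; exact le_refl 0
      | succ k ih =>
        rw [hgsucc k]
        apply entry_mul_nonneg hBinv_nn
        intro a b
        have h1 := entry_mul_nonneg (entry_mul_nonneg hC ih) ih a b
        have h2 := hA a b
        rw [Matrix.add_apply]
        linarith
    have hgmono : ∀ k i j, g k i j ≤ g (k + 1) i j := by
      intro k
      induction k with
      | zero => intro i j; rw [hg0]; exact hgnn 1 i j
      | succ k ih =>
        rw [hgsucc k, hgsucc (k + 1)]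
        apply entry_mul_mono hBinv_nn
        · intro a b
          have h1 := entry_mul_nonneg (entry_mul_nonneg hC (hgnn k)) (hgnn k) a b
          have h2 := hA a b
          rw [Matrix.add_apply]
          linarith
        · exact fun a b => le_refl _
        · intro a b
          rw [Matrix.add_apply, Matrix.add_apply]
          have := entry_mul_mono (entry_mul_nonneg hC (hgnn (k+1))) (hgnn k)
            (entry_mul_mono hC (hgnn k) (fun a b => le_refl _) ih) ih a b
          linarith
    have hgrow : ∀ k i, (g k *ᵥ fun _ => (1:ℝ)) i ≤ 1 := by
      intro k
      induction k with
      | zero =>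
        intro i
        rw [hg0, Matrix.zero_mulVec]
        exact zero_le_one
      | succ k ih =>
        intro i
        rw [hgsucc k, ← Matrix.mulVec_mulVec]
        have hinner : ∀ i', ((A + C * g k * g k) *ᵥ fun _ => (1:ℝ)) i'
            ≤ (B *ᵥ fun _ => (1:ℝ)) i' := by
          intro i'
          rw [Matrix.add_mulVec]
          have e1 : (C * g k * g k) *ᵥ (fun _ => (1:ℝ))
              = C *ᵥ (g k *ᵥ (g k *ᵥ fun _ => (1:ℝ))) := by
            rw [Matrix.mulVec_mulVec, Matrix.mulVec_mulVec]
          have step1 : ∀ a, (g k *ᵥ (g k *ᵥ fun _ => (1:ℝ))) a ≤ 1 := by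
            intro a
            calc (g k *ᵥ (g k *ᵥ fun _ => (1:ℝ))) a ≤ (g k *ᵥ fun _ => (1:ℝ)) a :=
                  mulVec_mono (hgnn k) ih a
            _ ≤ 1 := ih a
          have step2 := mulVec_mono hC step1 i'
          simp only [Pi.add_apply]
          rw [e1]
          have := hAC_B i'
          linarith
        calc (B⁻¹ *ᵥ ((A + C * g k * g k) *ᵥ fun _ => (1:ℝ))) i
            ≤ (B⁻¹ *ᵥ (B *ᵥ fun _ => (1:ℝ))) i := mulVec_mono hBinv_nn hinner i
          _ = 1 := by rw [Matrix.mulVec_mulVec, hBinvB, Matrix.one_mulVec]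
    have hgle1 : ∀ k i j, g k i j ≤ 1 := by
      intro k i j
      have h1 : g k i j ≤ ∑ j', g k i j' :=
        Finset.single_le_sum (fun j' _ => hgnn k i j') (Finset.mem_univ j)
      have h2 : (g k *ᵥ fun _ => (1:ℝ)) i = ∑ j', g k i j' := by
        simp [Matrix.mulVec, dotProduct]
      have := hgrow k i
      rw [h2] at this
      linarith
    set G : Matrix (Fin n) (Fin n) ℝ := Matrix.of fun i j => ⨆ k, g k i j with hG_def
    have hbdd : ∀ i j, BddAbove (Set.range fun k => g k i j) := by
      intro i j
      refine ⟨1, ?_⟩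
      rintro x ⟨k, rfl⟩
      exact hgle1 k i j
    have hGtend : ∀ i j, Tendsto (fun k => g k i j) atTop (nhds (G i j)) := by
      intro i j
      exact tendsto_atTop_ciSup (monotone_nat_of_le_succ fun k => hgmono k i j) (hbdd i j)
    have hGfix : G = B⁻¹ * (A + C * G * G) := by
      ext i j
      have hCgg := tendsto_entry_mul (X := fun _ => C) (Y := fun k => g k)
        (fun a b => tendsto_const_nhds) hGtend
      have hCgg2 := tendsto_entry_mul (X := fun k => C * g k) (Y := fun k => g k)
        hCgg hGtend
      have hY : ∀ a b, Tendsto (fun k => (A + C * g k * g k) a b) atTop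
          (nhds ((A + C * G * G) a b)) := by
        intro a b
        simp only [Matrix.add_apply]
        exact tendsto_const_nhds.add (hCgg2 a b)
      have hrhs := tendsto_entry_mul (X := fun _ => B⁻¹)
        (Y := fun k => A + C * g k * g k) (fun a b => tendsto_const_nhds) hY i j
      have hlhs : Tendsto (fun k => g (k + 1) i j) atTop (nhds (G i j)) :=
        (hGtend i j).comp (tendsto_add_atTop_nat 1)
      have heq : (fun k => g (k + 1) i j)
          = fun k => (B⁻¹ * (A + C * g k * g k)) i j := by
        funext k
        rw [hgsucc k]
      rw [heq] at hlhs
      exact tendsto_nhds_unique hlhs hrhs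
    refine ⟨G, ?_, ?_, ?_⟩
    · have hBG : B * G = A + C * G * G := by
        conv_lhs => rw [hGfix]
        rw [← Matrix.mul_assoc, hBBinv, Matrix.one_mul]
      have hpow : C * G ^ 2 = C * G * G := by rw [pow_two, ← Matrix.mul_assoc]
      rw [hpow, hBG]
      abel
    · intro i j
      have h0 : g 0 i j ≤ G i j := le_ciSup (hbdd i j) 0
      rw [hg0] at h0
      exact h0
    · intro i
      have hsumtend : Tendsto (fun k => ∑ j, g k i j) atTop (nhds (∑ j, G i j)) :=
        tendsto_finset_sum _ fun j _ => hGtend i j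
      have hle : ∀ k, ∑ j, g k i j ≤ 1 := by
        intro k
        have := hgrow k i
        simpa [Matrix.mulVec, dotProduct] using this
      have hfin : ∑ j, G i j ≤ 1 := le_of_tendsto hsumtend (Filter.Eventually.of_forall hle)
      simpa [Matrix.mulVec, dotProduct] using hfin
  -- ===================== R part =====================
  · obtain ⟨u₀, hu₀pos, hu₀Q⟩ := exists_stationary hn hA hC hs hP hBe hsum hirr
    set r : ℕ → Matrix (Fin n) (Fin n) ℝ :=
      qbdIter (fun R => (C + R * R * A) * B⁻¹) with hr_def
    have hrsucc : ∀ k, r (k + 1) = (C + r k * r k * A) * B⁻¹ := fun k => rfl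
    have hr0 : r 0 = 0 := rfl
    have hrnn : ∀ k i j, 0 ≤ r k i j := by
      intro k
      induction k with
      | zero => intro i j; rw [hr0]; exact le_refl 0
      | succ k ih =>
        rw [hrsucc k]
        apply entry_mul_nonneg _ hBinv_nn
        intro a b
        have h1 := entry_mul_nonneg (entry_mul_nonneg ih ih) hA a b
        have h2 := hC a b
        rw [Matrix.add_apply]
        linarith
    have hrmono : ∀ k i j, r k i j ≤ r (k + 1) i j := by
      intro k
      induction k with
      | zero => intro i j; rw [hr0]; exact hrnn 1 i j
      | succ k ih =>
        rw [hrsucc k, hrsucc (k + 1)]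
        apply entry_mul_mono _ hBinv_nn _ (fun a b => le_refl _)
        · intro a b
          have h1 := entry_mul_nonneg (entry_mul_nonneg (hrnn (k+1)) (hrnn (k+1))) hA a b
          have h2 := hC a b
          rw [Matrix.add_apply]
          linarith
        · intro a b
          rw [Matrix.add_apply, Matrix.add_apply]
          have := entry_mul_mono (entry_mul_nonneg (hrnn (k+1)) (hrnn (k+1))) hA
            (entry_mul_mono (hrnn (k+1)) (hrnn k) ih ih) (fun a b => le_refl _) a b
          linarith
    have hru : ∀ (u : Fin n → ℝ), (∀ i, 0 < u i) → u ᵥ* (A - B + C) = 0 →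
        ∀ k j, (u ᵥ* r k) j ≤ u j := by
      intro u hu huQ
      have huB : ∀ j, (u ᵥ* A) j + (u ᵥ* C) j = (u ᵥ* B) j := by
        intro j
        have h := congrFun huQ j
        rw [Matrix.vecMul_add, Matrix.vecMul_sub] at h
        simp only [Pi.add_apply, Pi.sub_apply, Pi.zero_apply] at h
        linarith
      intro k
      induction k with
      | zero =>
        intro j
        rw [hr0, Matrix.vecMul_zero]
        exact (hu j).le
      | succ k ih =>
        intro j
        rw [hrsucc k, ← Matrix.vecMul_vecMul]
        have h1 : ∀ j, (u ᵥ* (C + r k * r k * A)) j ≤ (u ᵥ* B) j := by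
          intro j
          rw [Matrix.vecMul_add]
          have e2 : u ᵥ* (r k * r k * A) = ((u ᵥ* r k) ᵥ* r k) ᵥ* A := by
            rw [Matrix.vecMul_vecMul, Matrix.vecMul_vecMul, Matrix.mul_assoc]
          have s1 := vecMul_mono (hrnn k) ih
          have s2 : ∀ j, ((u ᵥ* r k) ᵥ* r k) j ≤ u j := fun j => (s1 j).trans (ih j)
          have s3 := vecMul_mono hA s2 j
          simp only [Pi.add_apply]
          rw [e2]
          have := huB j
          linarith
        calc ((u ᵥ* (C + r k * r k * A)) ᵥ* B⁻¹) j
            ≤ ((u ᵥ* B) ᵥ* B⁻¹) j := vecMul_mono hBinv_nn h1 j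
          _ = u j := by rw [Matrix.vecMul_vecMul, hBBinv, Matrix.vecMul_one]
    have hrle : ∀ k i j, r k i j ≤ u₀ j / u₀ i := by
      intro k i j
      have h1 : u₀ i * r k i j ≤ ∑ l, u₀ l * r k l j :=
        Finset.single_le_sum (fun l _ => mul_nonneg (hu₀pos l).le (hrnn k l j))
          (Finset.mem_univ i)
      have h2 : (u₀ ᵥ* r k) j = ∑ l, u₀ l * r k l j := by
        simp [Matrix.vecMul, dotProduct]
      have h3 := hru u₀ hu₀pos hu₀Q k j
      rw [h2] at h3
      rw [le_div_iff₀ (hu₀pos i)]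
      calc r k i j * u₀ i = u₀ i * r k i j := by ring
        _ ≤ u₀ j := by linarith
    set R : Matrix (Fin n) (Fin n) ℝ := Matrix.of fun i j => ⨆ k, r k i j with hR_def
    have hbdd : ∀ i j, BddAbove (Set.range fun k => r k i j) := by
      intro i j
      refine ⟨u₀ j / u₀ i, ?_⟩
      rintro x ⟨k, rfl⟩
      exact hrle k i j
    have hRtend : ∀ i j, Tendsto (fun k => r k i j) atTop (nhds (R i j)) := by
      intro i j
      exact tendsto_atTop_ciSup (monotone_nat_of_le_succ fun k => hrmono k i j) (hbdd i j)
    have hRfix : R = (C + R * R * A) * B⁻¹ := by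
      ext i j
      have hrr := tendsto_entry_mul (X := fun k => r k) (Y := fun k => r k) hRtend hRtend
      have hrrA := tendsto_entry_mul (X := fun k => r k * r k) (Y := fun _ => A)
        hrr (fun a b => tendsto_const_nhds)
      have hY : ∀ a b, Tendsto (fun k => (C + r k * r k * A) a b) atTop
          (nhds ((C + R * R * A) a b)) := by
        intro a b
        simp only [Matrix.add_apply]
        exact tendsto_const_nhds.add (hrrA a b)
      have hrhs := tendsto_entry_mul (X := fun k => C + r k * r k * A)
        (Y := fun _ => B⁻¹) hY (fun a b => tendsto_const_nhds) i j
      have hlhs : Tendsto (fun k => r (k + 1) i j) atTop (nhds (R i j)) :=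
        (hRtend i j).comp (tendsto_add_atTop_nat 1)
      have heq : (fun k => r (k + 1) i j)
          = fun k => ((C + r k * r k * A) * B⁻¹) i j := by
        funext k
        rw [hrsucc k]
      rw [heq] at hlhs
      exact tendsto_nhds_unique hlhs hrhs
    refine ⟨R, ?_, ?_, ?_⟩
    · have hRB : R * B = C + R * R * A := by
        conv_lhs => rw [hRfix]
        rw [Matrix.mul_assoc, hBinvB, Matrix.mul_one]
      rw [pow_two, hRB]
      abel
    · intro i j
      have h0 : r 0 i j ≤ R i j := le_ciSup (hbdd i j) 0
      rw [hr0] at h0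
      exact h0
    · intro u hu huQ j
      have htend : Tendsto (fun k => (u ᵥ* r k) j) atTop (nhds ((u ᵥ* R) j)) := by
        have he : ∀ X : Matrix (Fin n) (Fin n) ℝ, (u ᵥ* X) j = ∑ l, u l * X l j := by
          intro X
          simp [Matrix.vecMul, dotProduct]
        simp only [he]
        exact tendsto_finset_sum _ fun l _ => tendsto_const_nhds.mul (hRtend l j)
      exact le_of_tendsto htend (Filter.Eventually.of_forall fun k => hru u hu huQ k j)
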